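/- Let k ≥ 1 and let a, b, i, j ∈ [0, k−1] with a ≠ b, i ≠ a, j ≠ b, and such that neither i nor j lies in the cyclic open interval (a, b)_k. Then min(w(a, b), w(i, j)) < min(w(a, j), w(i, b)); that is, exchanging the kets of two agents with bra-kets (a, j) and (i, b) — producing bra-kets (a, b) and (i, j) — strictly decreases the minimum weight of their two bra-kets. -/

import Mathlib

/-- The weight of a bra-ket `(i, j)`: `k` if `i = j`, and `(j - i) mod k` otherwise. -/
def wt (k : ℕ) (i j : Fin k) : ℕ :=
  if i = j then k else (((j : ℤ) - (i : ℤ)) % (k : ℤ)).toNat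

/-- `c` lies in the cyclic open interval `(a, b)_k`:
`0 < (c − a) mod k < (b − a) mod k`. -/
def inCyclicOpen (k : ℕ) (a b c : Fin k) : Prop :=
  0 < ((c : ℤ) - (a : ℤ)) % (k : ℤ) ∧
    ((c : ℤ) - (a : ℤ)) % (k : ℤ) < ((b : ℤ) - (a : ℤ)) % (k : ℤ)

lemma emod_decomp (k : ℕ) (hk : (0:ℤ) < (k:ℤ)) (z : ℤ) :
    ∃ m : ℤ, z % (k:ℤ) = z + m * k ∧ 0 ≤ z % (k:ℤ) ∧ z % (k:ℤ) < k :=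
  ⟨-(z / k), by rw [Int.emod_def]; ring, Int.emod_nonneg _ (by omega),
    Int.emod_lt_of_pos _ hk⟩

lemma wt_eq (k : ℕ) (x y : Fin k) :
    wt k x y = if (x:ℕ) = (y:ℕ) then k else (((y : ℤ) - (x : ℤ)) % (k : ℤ)).toNat := by
  simp [wt, Fin.ext_iff]


lemma mul_pin (kz : ℤ) (hk : 0 < kz) (m : ℤ) (h1 : -kz < m * kz) (h2 : m * kz < 2 * kz) :
    m * kz = 0 ∨ m * kz = kz := by
  have hm1 : (-1:ℤ) < m := (mul_lt_mul_iff_left₀ hk).mp (by linarith)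
  have hm2 : m < 2 := (mul_lt_mul_iff_left₀ hk).mp (by linarith)
  interval_cases m <;> simp

/-- If `a ≠ b`, `i ≠ a`, `j ≠ b` and neither `i` nor `j` lies in the cyclic open
interval `(a, b)_k`, then exchanging the kets of two agents with bra-kets
`(a, j)` and `(i, b)` — producing `(a, b)` and `(i, j)` — strictly decreases the
minimum weight of their two bra-kets. -/
theorem ket_exchange_decreases (k : ℕ) (hk : 1 ≤ k) (a b i j : Fin k)
    (hab : a ≠ b) (hia : i ≠ a) (hjb : j ≠ b)
    (hi : ¬ inCyclicOpen k a b i) (hj : ¬ inCyclicOpen k a b j) :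
    min (wt k a b) (wt k i j) < min (wt k a j) (wt k i b) := by
  have hk' : (0:ℤ) < (k:ℤ) := by exact_mod_cast hk
  obtain ⟨m1, e1, l1, u1⟩ := emod_decomp k hk' ((b:ℤ) - (a:ℤ))
  obtain ⟨m2, e2, l2, u2⟩ := emod_decomp k hk' ((j:ℤ) - (i:ℤ))
  obtain ⟨m3, e3, l3, u3⟩ := emod_decomp k hk' ((j:ℤ) - (a:ℤ))
  obtain ⟨m4, e4, l4, u4⟩ := emod_decomp k hk' ((b:ℤ) - (i:ℤ))
  obtain ⟨m5, e5, l5, u5⟩ := emod_decomp k hk' ((i:ℤ) - (a:ℤ))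
  have ha := a.isLt
  have hb := b.isLt
  have hi' := i.isLt
  have hj' := j.isLt
  have hab' : (a:ℕ) ≠ (b:ℕ) := fun h => hab (Fin.ext h)
  have hia' : (i:ℕ) ≠ (a:ℕ) := fun h => hia (Fin.ext h)
  have hjb' : (j:ℕ) ≠ (b:ℕ) := fun h => hjb (Fin.ext h)
  simp only [inCyclicOpen] at hi hj
  rw [e5, e1] at hi
  rw [e3, e1] at hj
  rw [e1] at l1 u1
  rw [e2] at l2 u2
  rw [e3] at l3 u3
  rw [e4] at l4 u4
  rw [e5] at l5 u5
  have p1 : m1 * (k:ℤ) = 0 ∨ m1 * (k:ℤ) = k := mul_pin k hk' m1 (by omega) (by omega)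
  have p2 : m2 * (k:ℤ) = 0 ∨ m2 * (k:ℤ) = k := mul_pin k hk' m2 (by omega) (by omega)
  have p3 : m3 * (k:ℤ) = 0 ∨ m3 * (k:ℤ) = k := mul_pin k hk' m3 (by omega) (by omega)
  have p4 : m4 * (k:ℤ) = 0 ∨ m4 * (k:ℤ) = k := mul_pin k hk' m4 (by omega) (by omega)
  have p5 : m5 * (k:ℤ) = 0 ∨ m5 * (k:ℤ) = k := mul_pin k hk' m5 (by omega) (by omega)
  have h1 : wt k a b < wt k a j := by
    rw [wt_eq, wt_eq, e1, e3]
    split_ifs <;> omega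
  have h2 : wt k a b < wt k i b := by
    rw [wt_eq, wt_eq, e1, e4]
    split_ifs <;> omega
  omega
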